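/- Let n ≥ 4, let c ∈ A_n be doubly pure, let r, s ∈ ℝ with r ≠ 0, and set a = r·c + s·ẽ_0 (a pure element of A_n). Then a is alternative if and only if c is alternative. -/

import Mathlib

noncomputable section

open scoped Quaternion

/-- The Cayley–Dickson algebra `A n = ℝ^(2^n)` as a type. -/
def CD : ℕ → Type
  | 0 => ℝ
  | n + 1 => CD n × CD n

namespace CD

instance instAddCommGroup : (n : ℕ) → AddCommGroup (CD n)
  | 0 => inferInstanceAs (AddCommGroup ℝ)
  | n + 1 =>
    letI := instAddCommGroup n
    inferInstanceAs (AddCommGroup (CD n × CD n))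

instance instModule : (n : ℕ) → Module ℝ (CD n)
  | 0 => inferInstanceAs (Module ℝ ℝ)
  | n + 1 =>
    letI := instModule n
    inferInstanceAs (Module ℝ (CD n × CD n))

/-- Conjugation in the Cayley–Dickson algebra. -/
def conj : {n : ℕ} → CD n → CD n
  | 0, x => x
  | _ + 1, x => (conj x.1, -x.2)

/-- Cayley–Dickson multiplication. -/
def mul : {n : ℕ} → CD n → CD n → CD n
  | 0, x, y => Mul.mul (α := ℝ) x y
  | _ + 1, x, y =>
    (mul x.1 y.1 - mul (conj y.2) x.2, mul y.2 x.1 + mul x.2 (conj y.1))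

instance instMul (n : ℕ) : Mul (CD n) := ⟨mul⟩

/-- The multiplicative unit `e₀`. -/
def one : {n : ℕ} → CD n
  | 0 => (1 : ℝ)
  | _ + 1 => (one, 0)

instance instOne (n : ℕ) : One (CD n) := ⟨one⟩

/-- The Euclidean inner product on `A n = ℝ^(2^n)`. -/
def inner : {n : ℕ} → CD n → CD n → ℝ
  | 0, x, y => (x * y : ℝ)
  | _ + 1, x, y => inner x.1 y.1 + inner x.2 y.2

/-- The Euclidean norm on `A n = ℝ^(2^n)`. -/
def norm {n : ℕ} (x : CD n) : ℝ := Real.sqrt (inner x x)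

/-- `ã = (-a₂, a₁)`. -/
def tilde {n : ℕ} (a : CD (n + 1)) : CD (n + 1) := (-a.2, a.1)

/-- `ẽ₀ = (0, e₀)`. -/
def etilde (n : ℕ) : CD (n + 1) := ((0 : CD n), (1 : CD n))

/-- An element is pure if its conjugate is its negative. -/
def IsPure {n : ℕ} (a : CD n) : Prop := conj a = -a

/-- An element of `A (n+1)` is doubly pure if both of its coordinates are pure. -/
def IsDoublyPure {n : ℕ} (a : CD (n + 1)) : Prop := IsPure a.1 ∧ IsPure a.2

/-- The associator `(a,b,c) = (ab)c - a(bc)`. -/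
def assoc {n : ℕ} (a b c : CD n) : CD n := a * b * c - a * (b * c)

/-- An element is alternative if `(a,a,x) = 0` for all `x`. -/
def IsAlternative {n : ℕ} (a : CD n) : Prop := ∀ x : CD n, assoc a a x = 0

/-- An element is strongly alternative if `(a,a,x) = 0` and `(a,x,x) = 0` for all `x`. -/
def IsStronglyAlternative {n : ℕ} (a : CD n) : Prop :=
  (∀ x : CD n, assoc a a x = 0) ∧ (∀ x : CD n, assoc a x x = 0)

/-- The pure (imaginary) part of an element. -/
def im {n : ℕ} (a : CD n) : CD n := (2⁻¹ : ℝ) • (a - conj a)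

/-- `H a`, the span of `{e₀, ã, a, ẽ₀}`. -/
def H {n : ℕ} (a : CD (n + 1)) : Submodule ℝ (CD (n + 1)) :=
  Submodule.span ℝ {(1 : CD (n + 1)), tilde a, a, etilde n}

/-- The orthogonal complement of `H a`. -/
def Hperp {n : ℕ} (a : CD (n + 1)) : Set (CD (n + 1)) :=
  {x | ∀ y ∈ H a, inner y x = 0}

end CD

namespace CD

theorem add_def' {n} (x y : CD (n+1)) : x + y = (x.1 + y.1, x.2 + y.2) := rfl
theorem neg_def' {n} (x : CD (n+1)) : -x = (-x.1, -x.2) := rfl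
theorem sub_def' {n} (x y : CD (n+1)) : x - y = (x.1 - y.1, x.2 - y.2) := rfl
theorem smul_def' {n} (r : ℝ) (x : CD (n+1)) : r • x = (r • x.1, r • x.2) := rfl
theorem conj_def' {n} (x : CD (n+1)) : conj x = (conj x.1, -x.2) := rfl
theorem mul_def' {n} (x y : CD (n+1)) :
    (x * y : CD (n+1)) = (x.1 * y.1 - conj y.2 * x.2, y.2 * x.1 + x.2 * conj y.1) := rfl
theorem one_def' {n} : (1 : CD (n+1)) = ((1 : CD n), 0) := rfl
theorem zero_def' {n} : (0 : CD (n+1)) = ((0 : CD n), 0) := rfl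
theorem etilde_def' {n} : etilde n = ((0 : CD n), (1 : CD n)) := rfl

theorem mk_eq_mk {n} {a b c d : CD n} (h1 : a = c) (h2 : b = d) :
    ((a, b) : CD (n+1)) = ((c, d) : CD (n+1)) := by rw [h1, h2]

theorem conj_zero' : ∀ {n}, conj (0 : CD n) = 0
  | 0 => rfl
  | n+1 => by
    erw [zero_def', conj_def']
    exact mk_eq_mk (conj_zero' (n := n)) neg_zero

theorem conj_one' : ∀ {n}, conj (1 : CD n) = 1
  | 0 => rfl
  | n+1 => by
    erw [one_def', conj_def']
    exact mk_eq_mk (conj_one' (n := n)) neg_zero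

theorem conj_add' : ∀ {n} (a b : CD n), conj (a + b) = conj a + conj b
  | 0, _, _ => rfl
  | n+1, a, b => by
    rw [conj_def', add_def', add_def', conj_def', conj_def']
    exact mk_eq_mk (conj_add' a.1 b.1) (neg_add _ _)

theorem conj_neg' : ∀ {n} (a : CD n), conj (-a) = -conj a
  | 0, _ => rfl
  | n+1, a => by
    rw [conj_def', neg_def', neg_def', conj_def']
    exact mk_eq_mk (conj_neg' a.1) rfl

theorem conj_sub' {n} (a b : CD n) : conj (a - b) = conj a - conj b := by
  rw [sub_eq_add_neg, conj_add', conj_neg', sub_eq_add_neg]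

theorem conj_smul' : ∀ {n} (r : ℝ) (a : CD n), conj (r • a) = r • conj a
  | 0, _, _ => rfl
  | n+1, r, a => by
    rw [conj_def', smul_def', smul_def', conj_def']
    exact mk_eq_mk (conj_smul' r a.1) (by rw [smul_neg])

theorem conj_conj' : ∀ {n} (a : CD n), conj (conj a) = a
  | 0, _ => rfl
  | n+1, a => by
    rw [conj_def', conj_def']
    exact (mk_eq_mk (conj_conj' a.1) (neg_neg a.2)).trans rfl

mutual
theorem mul_add' : ∀ {n} (a b c : CD n), a * (b + c) = a * b + a * c
  | 0, a, b, c => @mul_add ℝ _ _ _ a b c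
  | n+1, a, b, c => by
    erw [add_def', mul_def', mul_def', mul_def', add_def']
    refine mk_eq_mk ?_ ?_
    · show a.1 * (b.1 + c.1) - conj (b.2 + c.2) * a.2 = _
      rw [mul_add' a.1 b.1 c.1, conj_add', add_mul' (conj b.2) (conj c.2) a.2]; dsimp only; abel
    · show (b.2 + c.2) * a.1 + a.2 * conj (b.1 + c.1) = _
      rw [add_mul' b.2 c.2 a.1, conj_add', mul_add' a.2 (conj b.1) (conj c.1)]; dsimp only; abel

theorem add_mul' : ∀ {n} (a b c : CD n), (a + b) * c = a * c + b * c
  | 0, a, b, c => @add_mul ℝ _ _ _ a b c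
  | n+1, a, b, c => by
    erw [add_def', mul_def', mul_def', mul_def', add_def']
    refine mk_eq_mk ?_ ?_
    · show (a.1 + b.1) * c.1 - conj c.2 * (a.2 + b.2) = _
      rw [add_mul' a.1 b.1 c.1, mul_add' (conj c.2) a.2 b.2]; dsimp only; abel
    · show c.2 * (a.1 + b.1) + (a.2 + b.2) * conj c.1 = _
      rw [mul_add' c.2 a.1 b.1, add_mul' a.2 b.2 (conj c.1)]; dsimp only; abel
end

mutual
theorem zero_mul' : ∀ {n} (a : CD n), (0 : CD n) * a = 0
  | 0, a => @zero_mul ℝ _ a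
  | n+1, a => by
    erw [zero_def', mul_def']
    refine mk_eq_mk ?_ ?_
    · show (0 : CD n) * a.1 - conj a.2 * 0 = 0
      rw [zero_mul' a.1, mul_zero' (conj a.2), sub_zero]
    · show a.2 * 0 + (0 : CD n) * conj a.1 = 0
      rw [mul_zero' a.2, zero_mul' (conj a.1), add_zero]

theorem mul_zero' : ∀ {n} (a : CD n), a * (0 : CD n) = 0
  | 0, a => @mul_zero ℝ _ a
  | n+1, a => by
    erw [zero_def', mul_def']
    refine mk_eq_mk ?_ ?_
    · show a.1 * 0 - conj (0 : CD n) * a.2 = 0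
      rw [mul_zero' a.1, conj_zero', zero_mul' a.2, sub_zero]
    · show (0 : CD n) * a.1 + a.2 * conj (0 : CD n) = 0
      rw [zero_mul' a.1, conj_zero', mul_zero' a.2, add_zero]
end

mutual
theorem neg_mul' : ∀ {n} (a b : CD n), (-a) * b = -(a * b)
  | 0, a, b => @neg_mul ℝ _ _ a b
  | n+1, a, b => by
    erw [neg_def', mul_def', mul_def', neg_def']
    refine mk_eq_mk ?_ ?_
    · show (-a.1) * b.1 - conj b.2 * (-a.2) = _
      rw [neg_mul' a.1 b.1, mul_neg' (conj b.2) a.2]; dsimp only; abel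
    · show b.2 * (-a.1) + (-a.2) * conj b.1 = _
      rw [mul_neg' b.2 a.1, neg_mul' a.2 (conj b.1)]; dsimp only; abel

theorem mul_neg' : ∀ {n} (a b : CD n), a * (-b) = -(a * b)
  | 0, a, b => @mul_neg ℝ _ _ a b
  | n+1, a, b => by
    erw [neg_def', mul_def', mul_def', neg_def']
    refine mk_eq_mk ?_ ?_
    · show a.1 * (-b.1) - conj (-b.2) * a.2 = _
      rw [mul_neg' a.1 b.1, conj_neg', neg_mul' (conj b.2) a.2]; dsimp only; abel
    · show (-b.2) * a.1 + a.2 * conj (-b.1) = _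
      rw [neg_mul' b.2 a.1, conj_neg', mul_neg' a.2 (conj b.1)]; dsimp only; abel
end

mutual
theorem smul_mul' : ∀ {n} (r : ℝ) (a b : CD n), (r • a) * b = r • (a * b)
  | 0, r, a, b => @smul_mul_assoc ℝ ℝ _ _ _ r a b
  | n+1, r, a, b => by
    erw [smul_def', mul_def', mul_def', smul_def']
    refine mk_eq_mk ?_ ?_
    · show (r • a.1) * b.1 - conj b.2 * (r • a.2) = _
      rw [smul_mul' r a.1 b.1, mul_smul'' r (conj b.2) a.2, smul_sub]
    · show b.2 * (r • a.1) + (r • a.2) * conj b.1 = _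
      rw [mul_smul'' r b.2 a.1, smul_mul' r a.2 (conj b.1), smul_add]

theorem mul_smul'' : ∀ {n} (r : ℝ) (a b : CD n), a * (r • b) = r • (a * b)
  | 0, r, a, b => @mul_smul_comm ℝ ℝ _ _ _ r a b
  | n+1, r, a, b => by
    erw [smul_def', mul_def', mul_def', smul_def']
    refine mk_eq_mk ?_ ?_
    · show a.1 * (r • b.1) - conj (r • b.2) * a.2 = _
      rw [mul_smul'' r a.1 b.1, conj_smul', smul_mul' r (conj b.2) a.2, smul_sub]
    · show (r • b.2) * a.1 + a.2 * conj (r • b.1) = _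
      rw [smul_mul' r b.2 a.1, conj_smul', mul_smul'' r a.2 (conj b.1), smul_add]
end

mutual
theorem one_mul' : ∀ {n} (a : CD n), (1 : CD n) * a = a
  | 0, a => @one_mul ℝ _ a
  | n+1, a => by
    erw [one_def', mul_def']
    refine (mk_eq_mk ?_ ?_).trans rfl
    · show (1 : CD n) * a.1 - conj a.2 * 0 = a.1
      rw [one_mul' a.1, mul_zero' (conj a.2), sub_zero]
    · show a.2 * 1 + (0 : CD n) * conj a.1 = a.2
      rw [mul_one' a.2, zero_mul' (conj a.1), add_zero]

theorem mul_one' : ∀ {n} (a : CD n), a * (1 : CD n) = a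
  | 0, a => @mul_one ℝ _ a
  | n+1, a => by
    erw [one_def', mul_def']
    refine (mk_eq_mk ?_ ?_).trans rfl
    · show a.1 * 1 - conj (0 : CD n) * a.2 = a.1
      rw [mul_one' a.1, conj_zero', zero_mul' a.2, sub_zero]
    · show (0 : CD n) * a.1 + a.2 * conj (1 : CD n) = a.2
      rw [zero_mul' a.1, conj_one', mul_one' a.2, zero_add]
end

theorem conj_mul' : ∀ {n} (a b : CD n), conj (a * b) = conj b * conj a
  | 0, a, b => @mul_comm ℝ _ a b
  | n+1, a, b => by
    erw [mul_def', conj_def', conj_def', conj_def', mul_def']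
    refine mk_eq_mk ?_ ?_
    · show conj (a.1 * b.1 - conj b.2 * a.2) = conj b.1 * conj a.1 - conj (-a.2) * (-b.2)
      rw [conj_sub', conj_mul' a.1 b.1, conj_mul' (conj b.2) a.2, conj_conj',
        conj_neg', neg_mul', mul_neg', neg_neg]
    · show -(b.2 * a.1 + a.2 * conj b.1) = (-a.2) * conj b.1 + (-b.2) * conj (conj a.1)
      rw [conj_conj', neg_mul', neg_mul', neg_add]; abel

theorem etilde_mul' {n} (x : CD (n+1)) : etilde n * x = (-conj x.2, conj x.1) := by
  erw [etilde_def', mul_def']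
  refine mk_eq_mk ?_ ?_
  · show (0 : CD n) * x.1 - conj x.2 * 1 = -conj x.2
    rw [zero_mul' x.1, mul_one' (conj x.2), zero_sub]
  · show x.2 * 0 + (1 : CD n) * conj x.1 = conj x.1
    rw [mul_zero' x.2, one_mul' (conj x.1), zero_add]

theorem mul_etilde' {n} (x : CD (n+1)) : x * etilde n = (-x.2, x.1) := by
  erw [etilde_def', mul_def']
  refine mk_eq_mk ?_ ?_
  · show x.1 * 0 - conj (1 : CD n) * x.2 = -x.2
    rw [mul_zero' x.1, conj_one', one_mul' x.2, zero_sub]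
  · show (1 : CD n) * x.1 + x.2 * conj (0 : CD n) = x.1
    rw [one_mul' x.1, conj_zero', mul_zero' x.2, add_zero]

theorem assoc_etilde_etilde' {n} (x : CD (n+1)) : assoc (etilde n) (etilde n) x = 0 := by
  have h1 : etilde n * etilde n * x = -x := by
    rw [mul_etilde', show ((-(etilde n).2, (etilde n).1) : CD (n+1)) = (-1 : CD (n+1)) by
        rw [etilde_def', neg_def', one_def']
        exact mk_eq_mk rfl neg_zero.symm,
      neg_mul', one_mul']
  have h2 : etilde n * (etilde n * x) = -x := by
    erw [etilde_mul' x, etilde_mul', neg_def']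
    refine mk_eq_mk ?_ ?_
    · show -conj (conj x.1) = -x.1
      rw [conj_conj']
    · show conj (-conj x.2) = -x.2
      rw [conj_neg', conj_conj']
  rw [assoc, h1, h2, sub_self]

theorem assoc_mixed' {n} (c : CD (n+1)) (h1 : conj c.1 = -c.1) (h2 : conj c.2 = -c.2)
    (x : CD (n+1)) : assoc c (etilde n) x + assoc (etilde n) c x = 0 := by
  have hce : c * etilde n + etilde n * c = 0 := by
    erw [mul_etilde' c, etilde_mul' c, h1, h2, add_def', zero_def']
    exact mk_eq_mk (by dsimp only; abel) (by dsimp only; abel)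
  have hA : (c * etilde n) * x + (etilde n * c) * x = 0 := by
    rw [← add_mul', hce, zero_mul']
  have hB : c * (etilde n * x) + etilde n * (c * x) = 0 := by
    erw [etilde_mul' x, mul_def' c x, etilde_mul', mul_def' c, add_def', zero_def']
    refine mk_eq_mk ?_ ?_
    · show c.1 * (-conj x.2) - conj (conj x.1) * c.2
        + -conj (x.2 * c.1 + c.2 * conj x.1) = 0
      simp only [conj_conj', conj_add', conj_sub', conj_mul', h1, h2, mul_neg', neg_mul',
        neg_neg]
      abel
    · show conj x.1 * c.1 + c.2 * conj (-conj x.2)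
        + conj (c.1 * x.1 - conj x.2 * c.2) = 0
      simp only [conj_neg', conj_conj', conj_sub', conj_add', conj_mul', h1, h2, mul_neg',
        neg_mul', neg_neg]
      abel
  rw [assoc, assoc,
    show c * etilde n * x - c * (etilde n * x) + (etilde n * c * x - etilde n * (c * x))
      = (c * etilde n * x + etilde n * c * x)
        - (c * (etilde n * x) + etilde n * (c * x)) from by abel,
    hA, hB, sub_zero]

theorem assoc_add_left' {n} (a b c x : CD n) :
    assoc (a + b) c x = assoc a c x + assoc b c x := by
  simp only [assoc, add_mul']; abel

theorem assoc_add_mid' {n} (a b c x : CD n) :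
    assoc a (b + c) x = assoc a b x + assoc a c x := by
  simp only [assoc, mul_add', add_mul']; abel

theorem assoc_smul_left' {n} (r : ℝ) (a c x : CD n) :
    assoc (r • a) c x = r • assoc a c x := by
  simp only [assoc, smul_mul', smul_sub]

theorem assoc_smul_mid' {n} (r : ℝ) (a c x : CD n) :
    assoc a (r • c) x = r • assoc a c x := by
  simp only [assoc, mul_smul'', smul_mul', smul_sub]

end CD

/-- For `n ≥ 4`, `c` doubly pure and `r ≠ 0`,
`a = r·c + s·ẽ₀` is alternative iff `c` is alternative. -/
theorem smul_add_smul_etilde_isAlternative_iff (n : ℕ) (hn : 4 ≤ n + 1) (c : CD (n + 1))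
    (hc : CD.IsDoublyPure c) (r s : ℝ) (hr : r ≠ 0) :
    CD.IsAlternative (r • c + s • CD.etilde n) ↔ CD.IsAlternative c := by 
  have key : ∀ x, CD.assoc (r • c + s • CD.etilde n) (r • c + s • CD.etilde n) x
      = (r * r) • CD.assoc c c x := by
    intro x
    have hm : CD.assoc c (CD.etilde n) x + CD.assoc (CD.etilde n) c x = 0 :=
      CD.assoc_mixed' c hc.1 hc.2 x
    rw [CD.assoc_add_left', CD.assoc_smul_left', CD.assoc_smul_left',
      CD.assoc_add_mid' c, CD.assoc_smul_mid', CD.assoc_smul_mid',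
      CD.assoc_add_mid' (CD.etilde n), CD.assoc_smul_mid', CD.assoc_smul_mid',
      CD.assoc_etilde_etilde' x, smul_zero, add_zero, smul_add, smul_smul, smul_smul,
      smul_smul, mul_comm s r, add_assoc, ← smul_add, hm, smul_zero, add_zero]
  constructor
  · intro ha x
    have h0 : (r * r) • CD.assoc c c x = 0 := by rw [← key x, ha]
    have h1 : CD.assoc c c x = ((r * r)⁻¹ * (r * r)) • CD.assoc c c x := by
      rw [inv_mul_cancel₀ (mul_ne_zero hr hr), one_smul]
    rw [h1, ← smul_smul, h0, smul_zero]
  · intro hca x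
    rw [key x, hca, smul_zero]
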